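/- Let $\{M_n\}$ be a stationary ergodic Markov chain of order one on a finite or countable state space $S$, let $s\in S$ with $P(M_1=s)>0$ be a state visited with positive probability, and set $X_n = \mathbf{1}_{\{M_n=s\}}$. Then the binary process $\{X_n\}$ is stationary, ergodic, and finitarily Markovian: almost surely the conditional distribution of $X_1$ given $X_{-\infty}^0$ depends only on the coordinates back to (and including) the most recent occurrence of a one in $X_{-\infty}^0$. -/

import Mathlib

open MeasureTheory Filter Set
open scoped ENNReal

attribute [local instance] Classical.propDecidable

namespace MemoryEst

variable {Ω : Type*} [MeasurableSpace Ω] {𝒳 : Type*} [MeasurableSpace 𝒳]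

/-- The word `w` (read left to right) occupies positions `l - w.length + 1, …, l`. -/
def wordEndsAt (X : ℤ → Ω → 𝒳) (l : ℤ) (w : List 𝒳) (ω : Ω) : Prop :=
  ∀ j : Fin w.length, X (l - (w.length : ℤ) + 1 + ((j : ℕ) : ℤ)) ω = w.get j

def cyl (X : ℤ → Ω → 𝒳) (l : ℤ) (w : List 𝒳) : Set Ω := {ω | wordEndsAt X l w ω}

/-- `P(X_{-k+1}^0 = w)` where `k = w.length`. -/
noncomputable def wordProb (μ : Measure Ω) (X : ℤ → Ω → 𝒳) (w : List 𝒳) : ℝ :=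
  (μ (cyl X 0 w)).toReal

/-- `p(x | w) = P(X_1 = x | X_{-k+1}^0 = w)`. -/
noncomputable def condProb (μ : Measure Ω) (X : ℤ → Ω → 𝒳) (x : 𝒳) (w : List 𝒳) : ℝ :=
  (μ (cyl X 0 w ∩ {ω | X 1 ω = x})).toReal / wordProb μ X w

def IsStationary (μ : Measure Ω) (X : ℤ → Ω → 𝒳) : Prop :=
  ∀ (l : ℤ) (w : List 𝒳), μ (cyl X l w) = μ (cyl X 0 w)

/-- `w` is a memory word: it has positive probability and the conditional law of the
next symbol does not change under any left extension of positive probability. -/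
def IsMemoryWord (μ : Measure Ω) (X : ℤ → Ω → 𝒳) (w : List 𝒳) : Prop :=
  0 < wordProb μ X w ∧
    ∀ (z : List 𝒳) (y : 𝒳), z ≠ [] → 0 < wordProb μ X (z ++ w ++ [y]) →
      condProb μ X y w = condProb μ X y (z ++ w)

/-- The word `(X_{l-k+1}, …, X_l)`. -/
def pastWord (X : ℤ → Ω → 𝒳) (l : ℤ) (k : ℕ) (ω : Ω) : List 𝒳 :=
  (List.range k).map fun j => X (l - (k : ℤ) + 1 + (j : ℤ)) ω

/-- `K(X_{-∞}^l)`: least `k` such that `X_{l-k+1}^l` is a memory word (`sInf ∅ = 0`). -/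
noncomputable def memoryLenNat (μ : Measure Ω) (X : ℤ → Ω → 𝒳) (l : ℤ) (ω : Ω) : ℕ :=
  sInf {k : ℕ | IsMemoryWord μ X (pastWord X l k ω)}

def FinitarilyMarkovian (μ : Measure Ω) (X : ℤ → Ω → 𝒳) : Prop :=
  ∀ᵐ ω ∂μ, ∃ k : ℕ, IsMemoryWord μ X (pastWord X 0 k ω)

/-- Number of positions `l ∈ [a,b]` at which the word `w` ends. -/
noncomputable def countOcc (X : ℤ → Ω → 𝒳) (a b : ℤ) (w : List 𝒳) (ω : Ω) : ℕ :=
  ((Finset.Icc a b).filter fun l => wordEndsAt X l w ω).card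

/-- Empirical conditional probability `p̂_n(x|w)` from the data segment `X_{-n}^0`. -/
noncomputable def empP (X : ℤ → Ω → 𝒳) (n : ℕ) (x : 𝒳) (w : List 𝒳) (ω : Ω) : ℝ :=
  (countOcc X (-(n : ℤ) + w.length) 0 (w ++ [x]) ω : ℝ) /
    (countOcc X (-(n : ℤ) + w.length - 1) (-1) w ω : ℝ)

/-- `w ∈ 𝓛ⁿ_{w.length}`: the word `w` appears more than `n^{1-γ}` times in `X_{-n}^0`. -/
def memLong (γ : ℝ) (X : ℤ → Ω → 𝒳) (n : ℕ) (w : List 𝒳) (ω : Ω) : Prop :=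
  (n : ℝ) ^ (1 - γ) < (countOcc X (-(n : ℤ) + w.length - 1) 0 w ω : ℝ)

/-- Empirical discrepancy `Δ̂ⁿ_k(w)` (with `sSup ∅ = 0`). -/
noncomputable def empDelta (γ : ℝ) (X : ℤ → Ω → 𝒳) (n : ℕ) (w : List 𝒳) (ω : Ω) : ℝ :=
  sSup {d : ℝ | ∃ (z : List 𝒳) (x : 𝒳), 1 ≤ z.length ∧ z.length ≤ n ∧
    memLong γ X n (z ++ w ++ [x]) ω ∧
    d = |empP X n x w ω - empP X n x (z ++ w) ω|}

/-- The discrepancy `Δ_k(w)` measuring failure of `w` to be a memory word. -/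
noncomputable def Delta (μ : Measure Ω) (X : ℤ → Ω → 𝒳) (w : List 𝒳) : ℝ :=
  sSup {d : ℝ | ∃ (z : List 𝒳) (x : 𝒳), z ≠ [] ∧ 0 < wordProb μ X (z ++ w ++ [x]) ∧
    d = |condProb μ X x w - condProb μ X x (z ++ w)|}

def NTEST (γ β : ℝ) (X : ℤ → Ω → 𝒳) (n : ℕ) (w : List 𝒳) (ω : Ω) : Prop :=
  empDelta γ X n w ω ≤ (n : ℝ) ^ (-β)

/-- Forward recurrence times `λ⁺_{l,k,i}` of the word occupying `(l-k, l]`. -/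
noncomputable def lamPos (X : ℤ → Ω → 𝒳) (l : ℤ) (k : ℕ) (ω : Ω) : ℕ → ℕ
  | 0 => 0
  | i + 1 =>
    lamPos X l k ω i +
      sInf {t : ℕ | 0 < t ∧ ∀ j : Fin k,
        X (l + (lamPos X l k ω i : ℤ) + (t : ℤ) - ((j : ℕ) : ℤ)) ω =
          X (l + (lamPos X l k ω i : ℤ) - ((j : ℕ) : ℤ)) ω}

/-- Backward recurrence times `λ⁻_{l,k,i}` of the word occupying `(l-k, l]`. -/
noncomputable def lamNeg (X : ℤ → Ω → 𝒳) (l : ℤ) (k : ℕ) (ω : Ω) : ℕ → ℕ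
  | 0 => 0
  | i + 1 =>
    lamNeg X l k ω i +
      sInf {t : ℕ | 0 < t ∧ ∀ j : Fin k,
        X (l - (lamNeg X l k ω i : ℤ) - (t : ℤ) - ((j : ℕ) : ℤ)) ω =
          X (l - (lamNeg X l k ω i : ℤ) - ((j : ℕ) : ℤ)) ω}

/-- The left shift on two-sided path space. -/
def shift (𝒳 : Type*) : (ℤ → 𝒳) → (ℤ → 𝒳) := fun ω n => ω (n + 1)

/-- The canonical process on path space. -/
def proc (𝒳 : Type*) : ℤ → (ℤ → 𝒳) → 𝒳 := fun n ω => ω n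

/-- First order Markov property for the canonical process. -/
def MarkovOrderOne {S : Type*} [MeasurableSpace S] (μ : Measure (ℤ → S)) : Prop :=
  ∀ (w : List S) (a y : S), 0 < wordProb μ (proc S) (w ++ [a]) →
    condProb μ (proc S) y (w ++ [a]) = condProb μ (proc S) y [a]

/-- Markov chain of order `L`: every positive-probability word of length `L` is a memory word. -/
def MarkovOfOrder {S : Type*} [MeasurableSpace S] (μ : Measure (ℤ → S)) (L : ℕ) : Prop :=
  ∀ w : List S, w.length = L → 0 < wordProb μ (proc S) w → IsMemoryWord μ (proc S) w

/-- The forward recurrence times `ζ_n(i)` of the left-extension reconstruction scheme. -/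
noncomputable def zeta (X : ℤ → Ω → 𝒳) (i : ℕ) (ω : Ω) : ℕ → ℕ
  | 0 => 0
  | n + 1 =>
    zeta X i ω n +
      sInf {t : ℕ | 0 < t ∧ ∀ j : Fin (n + 1),
        X ((i : ℤ) + (zeta X i ω n : ℤ) - (n : ℤ) + ((j : ℕ) : ℤ) + (t : ℤ)) ω =
          X ((i : ℤ) + (zeta X i ω n : ℤ) - (n : ℤ) + ((j : ℕ) : ℤ)) ω}

/-- The reconstructed past `X̃_{-n}(i)`. -/
noncomputable def tildeX (X : ℤ → Ω → 𝒳) (i : ℕ) (n : ℕ) (ω : Ω) : 𝒳 :=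
  X ((i : ℤ) + (zeta X i ω n : ℤ) - (n : ℤ)) ω

/-- The backward recurrence times `ζ̂ᵏ_i`. -/
noncomputable def hatZeta (X : ℤ → Ω → 𝒳) (k : ℕ) (ω : Ω) : ℕ → ℤ
  | 0 => 0
  | i + 1 =>
    hatZeta X k ω i -
      sInf {t : ℕ | 0 < t ∧ ∀ j : Fin (k - i),
        X (hatZeta X k ω i - ((k - i - 1 : ℕ) : ℤ) + ((j : ℕ) : ℤ) - (t : ℤ)) ω =
          X (hatZeta X k ω i - ((k - i - 1 : ℕ) : ℤ) + ((j : ℕ) : ℤ)) ω}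

/-- The transition matrix of the chain `Z` on the nonnegative integers. -/
noncomputable def Ptrans (s j : ℕ) : ℝ :=
  if s < j then (2 : ℝ) ^ (-((j : ℤ) - (s : ℤ)) - 1)
  else if j = s then (2 : ℝ) ^ (-(s : ℤ) - 1)
  else (2 : ℝ) ^ (-(j : ℤ) - 2)

/-- The backward memory-length estimator `χ_n`. -/
noncomputable def chiEst (γ β : ℝ) (X : ℤ → Ω → 𝒳) (n : ℕ) (ω : Ω) : ℕ :=
  if ∃ k, k < n ∧ NTEST γ β X n (pastWord X 0 k ω) ω then
    sInf {k : ℕ | k < n ∧ NTEST γ β X n (pastWord X 0 k ω) ω}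
  else n


/-! ### infrastructure -/

section Infra
variable {𝒳 : Type*} [MeasurableSpace 𝒳] [MeasurableSingletonClass 𝒳] [Countable 𝒳]

lemma wordEndsAt_iff_getElem {X : ℤ → Ω → 𝒳} {l : ℤ} {w : List 𝒳} {ω : Ω} :
    wordEndsAt X l w ω ↔ ∀ (j : ℕ) (h : j < w.length),
      X (l - (w.length : ℤ) + 1 + (j : ℤ)) ω = w[j] := by
  constructor
  · intro h j hj; exact h ⟨j, hj⟩
  · intro h j; exact h j j.2

lemma pastWord_eq_map {X : ℤ → Ω → 𝒳} {l : ℤ} {k : ℕ} {ω : Ω} :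
    pastWord X l k ω = (List.range k).map fun j : ℕ => X (l - (k : ℤ) + 1 + (j : ℤ)) ω := by
  rw [pastWord]
  simp only [bind_pure_comp, List.map_eq_map, List.map_map]
  rfl

@[simp] lemma pastWord_length {X : ℤ → Ω → 𝒳} {l : ℤ} {k : ℕ} {ω : Ω} :
    (pastWord X l k ω).length = k := by
  rw [pastWord_eq_map, List.length_map, List.length_range]

lemma pastWord_getElem {X : ℤ → Ω → 𝒳} {l : ℤ} {k : ℕ} {ω : Ω} {j : ℕ} (h : j < k) :
    (pastWord X l k ω)[j]'(by simpa using h) = X (l - (k : ℤ) + 1 + (j : ℤ)) ω := by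
  simp only [pastWord_eq_map, List.getElem_map, List.getElem_range]

lemma mem_cyl_iff {X : ℤ → Ω → 𝒳} {l : ℤ} {v : List 𝒳} {ω : Ω} :
    ω ∈ cyl X l v ↔ pastWord X l v.length ω = v := by
  constructor
  · intro h
    refine List.ext_getElem (by simp) ?_
    intro j hj₁ hj₂
    rw [pastWord_getElem (by simpa using hj₁)]
    exact wordEndsAt_iff_getElem.1 h j hj₂
  · intro h
    rw [cyl, Set.mem_setOf_eq, wordEndsAt_iff_getElem]
    intro j hj
    have h2 := List.getElem_of_eq h.symm hj
    rw [h2, pastWord_getElem (by simpa using hj)]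

lemma self_mem_cyl_pastWord {X : ℤ → Ω → 𝒳} {l : ℤ} {k : ℕ} {ω : Ω} :
    ω ∈ cyl X l (pastWord X l k ω) := by
  rw [mem_cyl_iff, pastWord_length]

lemma measurableSet_cyl {l : ℤ} {w : List 𝒳} : MeasurableSet (cyl (proc 𝒳) l w) := by
  have : cyl (proc 𝒳) l w =
      ⋂ j : Fin w.length, (fun ω : ℤ → 𝒳 => ω (l - (w.length : ℤ) + 1 + (j : ℕ)))
        ⁻¹' {w.get j} := by
    ext ω; simp [cyl, wordEndsAt, Set.mem_iInter, proc]
  rw [this]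
  exact MeasurableSet.iInter fun j =>
    (measurable_pi_apply _) (measurableSet_singleton _)

lemma measurableSet_eval {t : ℤ} {T : Set 𝒳} (hT : MeasurableSet T) :
    MeasurableSet {ω : ℤ → 𝒳 | ω t ∈ T} := measurable_pi_apply t hT

lemma measurable_shift : Measurable (shift 𝒳) :=
  measurable_pi_lambda _ fun n => measurable_pi_apply (n + 1)

lemma shift_preimage_cyl {l : ℤ} {w : List 𝒳} :
    shift 𝒳 ⁻¹' cyl (proc 𝒳) l w = cyl (proc 𝒳) (l + 1) w := by
  ext ω
  simp only [Set.mem_preimage, cyl, Set.mem_setOf_eq, wordEndsAt, proc, shift]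
  constructor <;> intro h j <;> have := h j <;>
    (convert this using 2; ring)

lemma shift_iterate_preimage_cyl {n : ℕ} {l : ℤ} {w : List 𝒳} :
    (shift 𝒳)^[n] ⁻¹' cyl (proc 𝒳) l w = cyl (proc 𝒳) (l + n) w := by
  induction n with
  | zero => simp
  | succ n ih =>
    rw [Function.iterate_succ, Set.preimage_comp, ih, shift_preimage_cyl]
    congr 1; push_cast; ring

lemma stationary_of_measurePreserving {m : Measure (ℤ → 𝒳)}
    (h : MeasurePreserving (shift 𝒳) m m) : IsStationary m (proc 𝒳) := by
  intro l w
  rcases le_or_gt 0 l with hl | hl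
  · have : cyl (proc 𝒳) l w = (shift 𝒳)^[l.toNat] ⁻¹' cyl (proc 𝒳) 0 w := by
      rw [shift_iterate_preimage_cyl]
      have e : (0 : ℤ) + l.toNat = l := by omega
      rw [e]
    rw [this, (h.iterate l.toNat).measure_preimage measurableSet_cyl.nullMeasurableSet]
  · have : cyl (proc 𝒳) 0 w = (shift 𝒳)^[(-l).toNat] ⁻¹' cyl (proc 𝒳) l w := by
      rw [shift_iterate_preimage_cyl]
      have e : l + ((-l).toNat : ℤ) = 0 := by omega
      rw [e]
    rw [this, (h.iterate (-l).toNat).measure_preimage measurableSet_cyl.nullMeasurableSet]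

lemma cyl_append {X : ℤ → Ω → 𝒳} {l : ℤ} {P R : List 𝒳} :
    cyl X l (P ++ R) = cyl X (l - R.length) P ∩ cyl X l R := by
  ext ω
  simp only [cyl, Set.mem_inter_iff, Set.mem_setOf_eq, wordEndsAt_iff_getElem,
    List.length_append]
  constructor
  · intro h
    refine ⟨fun j hj => ?_, fun j hj => ?_⟩
    · have := h j (by omega)
      rw [List.getElem_append_left hj] at this
      convert this using 2
      push_cast; ring
    · have := h (P.length + j) (by omega)
      rw [List.getElem_append_right (by omega)] at this
      simp only [Nat.add_sub_cancel_left] at this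
      convert this using 2
      push_cast; ring
  · rintro ⟨h₁, h₂⟩ j hj
    rcases lt_or_ge j P.length with hj' | hj'
    · rw [List.getElem_append_left hj']
      have := h₁ j hj'
      convert this using 2
      push_cast; ring
    · rw [List.getElem_append_right hj']
      have := h₂ (j - P.length) (by omega)
      convert this using 2
      push_cast; omega

lemma cyl_singleton {X : ℤ → Ω → 𝒳} {l : ℤ} {a : 𝒳} :
    cyl X l [a] = {ω | X l ω = a} := by
  ext ω
  simp only [cyl, Set.mem_setOf_eq, wordEndsAt_iff_getElem, List.length_cons,
    List.length_nil]
  constructor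
  · intro h; have := h 0 (by norm_num); simpa using this
  · intro h j hj
    interval_cases j
    simpa using h

end Infra


section SSide
variable {S : Type*} [MeasurableSpace S] [MeasurableSingletonClass S] [Countable S]
variable (μ : Measure (ℤ → S)) [IsProbabilityMeasure μ]

noncomputable def rr (y a : S) : ℝ≥0∞ :=
  μ (cyl (proc S) 0 [a] ∩ {σ | σ 1 = y}) / μ (cyl (proc S) 0 [a])

noncomputable def rho (T : Set S) (a : S) : ℝ≥0∞ :=
  μ (cyl (proc S) 0 [a] ∩ {σ | σ 1 ∈ T}) / μ (cyl (proc S) 0 [a])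

noncomputable def QQ : S → List S → ℝ≥0∞
  | _, [] => 1
  | a, y :: v => rr μ y a * QQ y v

def lastD {α : Type*} : α → List α → α
  | a, [] => a
  | _, y :: v => lastD y v

lemma cyl_subset_last {X : ℤ → Ω → S} {l : ℤ} {P : List S} (hP : P ≠ []) :
    cyl X l P ⊆ cyl X l [P.getLast hP] := by
  intro σ h
  rw [cyl, Set.mem_setOf_eq, wordEndsAt_iff_getElem] at h ⊢
  intro j hj
  simp only [List.length_cons, List.length_nil] at hj
  interval_cases j
  have hlen : 0 < P.length := List.length_pos_iff.2 hP
  have h2 := h (P.length - 1) (by omega)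
  have e : l - ((([P.getLast hP] : List S)).length : ℤ) + 1 + ((0 : ℕ) : ℤ)
      = l - (P.length : ℤ) + 1 + ((P.length - 1 : ℕ) : ℤ) := by
    simp only [List.length_cons, List.length_nil]
    omega
  rw [e]
  rw [h2]
  simp [List.getLast_eq_getElem]

lemma measurableSet_coord {t : ℤ} {y : S} : MeasurableSet {σ : ℤ → S | σ t = y} := by
  have : {σ : ℤ → S | σ t = y} = {σ : ℤ → S | σ t ∈ ({y} : Set S)} := by ext; simp
  rw [this]; exact measurableSet_eval (measurableSet_singleton _)

lemma measurableSet_coordT {t : ℤ} {T : Set S} : MeasurableSet {σ : ℤ → S | σ t ∈ T} :=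
  measurableSet_eval (Set.to_countable T).measurableSet

lemma rr_ne_top {y a : S} (hd : μ (cyl (proc S) 0 [a]) ≠ 0) : rr μ y a ≠ ∞ := by
  rw [rr]
  intro h
  rcases ENNReal.div_eq_top.1 h with ⟨-, h2⟩ | ⟨h1, -⟩
  · exact hd h2
  · exact measure_ne_top μ _ h1

lemma step_inter (hmk : MarkovOrderOne μ) {P : List S} (hP : P ≠ []) {a : S}
    (ha : P.getLast hP = a) (y : S) :
    μ (cyl (proc S) 0 P ∩ {σ | σ 1 = y}) = μ (cyl (proc S) 0 P) * rr μ y a := by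
  by_cases h0 : μ (cyl (proc S) 0 P) = 0
  · rw [h0, zero_mul]
    exact le_antisymm ((measure_mono Set.inter_subset_left).trans h0.le) zero_le
  · have hsub : cyl (proc S) 0 P ⊆ cyl (proc S) 0 [a] := by
      rw [← ha]; exact cyl_subset_last hP
    have hd0 : μ (cyl (proc S) 0 [a]) ≠ 0 := fun h =>
      h0 (le_antisymm ((measure_mono hsub).trans h.le) zero_le)
    have hPeq : P.dropLast ++ [a] = P := by rw [← ha, List.dropLast_append_getLast hP]
    have hmk' := hmk P.dropLast a y (by
      rw [hPeq]
      exact ENNReal.toReal_pos h0 (measure_ne_top μ _))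
    rw [hPeq] at hmk'
    unfold condProb wordProb at hmk'
    have hsets : ∀ (R : Set (ℤ → S)), R ∩ {σ | proc S 1 σ = y} = R ∩ {σ | σ 1 = y} := by
      intro R; rfl
    rw [hsets, hsets] at hmk'
    have hN : μ (cyl (proc S) 0 P ∩ {σ | σ 1 = y}) ≠ ∞ := measure_ne_top μ _
    have hR : μ (cyl (proc S) 0 P) * rr μ y a ≠ ∞ :=
      ENNReal.mul_ne_top (measure_ne_top μ _) (rr_ne_top μ hd0)
    rw [← ENNReal.toReal_eq_toReal_iff' hN hR, ENNReal.toReal_mul]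
    have hrr : (rr μ y a).toReal
        = (μ (cyl (proc S) 0 [a] ∩ {σ | σ 1 = y})).toReal / (μ (cyl (proc S) 0 [a])).toReal := by
      rw [rr, ENNReal.toReal_div]
    rw [hrr, ← hmk']
    have hD : (μ (cyl (proc S) 0 P)).toReal ≠ 0 :=
      (ENNReal.toReal_ne_zero).2 ⟨h0, measure_ne_top μ _⟩
    field_simp

lemma step_append (hmp : MeasurePreserving (shift S) μ μ) (P : List S) (y : S) :
    μ (cyl (proc S) 0 (P ++ [y])) = μ (cyl (proc S) 0 P ∩ {σ | σ 1 = y}) := by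
  have h1 : cyl (proc S) 0 (P ++ [y]) = cyl (proc S) (-1) P ∩ {σ : ℤ → S | σ 0 = y} := by
    rw [cyl_append, cyl_singleton]
    have : (0 : ℤ) - (([y] : List S).length : ℤ) = -1 := by simp
    rw [this]
    rfl
  have h2 : shift S ⁻¹' (cyl (proc S) (-1) P ∩ {σ : ℤ → S | σ 0 = y})
      = cyl (proc S) 0 P ∩ {σ | σ 1 = y} := by
    rw [Set.preimage_inter, shift_preimage_cyl]
    have : shift S ⁻¹' {σ : ℤ → S | σ 0 = y} = {σ : ℤ → S | σ 1 = y} := by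
      ext σ; simp [shift]
    rw [this]
    norm_num
  rw [h1, ← h2,
    hmp.measure_preimage (measurableSet_cyl.inter measurableSet_coord).nullMeasurableSet]

lemma inter_coordT_eq_tsum {T : Set S} (R : Set (ℤ → S)) (hR : MeasurableSet R) :
    μ (R ∩ {σ | σ 1 ∈ T}) = ∑' y : T, μ (R ∩ {σ | σ 1 = (y : S)}) := by
  have hdecomp : R ∩ {σ : ℤ → S | σ 1 ∈ T} = ⋃ y : T, (R ∩ {σ : ℤ → S | σ 1 = (y : S)}) := by
    ext σ; simp only [Set.mem_inter_iff, Set.mem_setOf_eq, Set.mem_iUnion]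
    constructor
    · rintro ⟨h1, h2⟩; exact ⟨⟨σ 1, h2⟩, h1, rfl⟩
    · rintro ⟨y, h1, h2⟩; exact ⟨h1, h2 ▸ y.2⟩
  rw [hdecomp, measure_iUnion ?_ fun y => hR.inter measurableSet_coord]
  intro y₁ y₂ hne
  simp only [Function.onFun]
  rw [Set.disjoint_left]
  rintro σ ⟨-, h1⟩ ⟨-, h2⟩
  simp only [Set.mem_setOf_eq] at h1 h2
  exact hne (Subtype.ext (h1.symm.trans h2))

lemma step_inter_set (hmk : MarkovOrderOne μ) {P : List S} (hP : P ≠ []) {a : S}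
    (ha : P.getLast hP = a) (T : Set S) :
    μ (cyl (proc S) 0 P ∩ {σ | σ 1 ∈ T}) = μ (cyl (proc S) 0 P) * rho μ T a := by
  rw [inter_coordT_eq_tsum μ _ measurableSet_cyl]
  have h1 : ∀ y : T, μ (cyl (proc S) 0 P ∩ {σ | σ 1 = (y : S)})
      = μ (cyl (proc S) 0 P) * rr μ (y : S) a := fun y => step_inter μ hmk hP ha y
  rw [tsum_congr h1, ENNReal.tsum_mul_left]
  congr 1
  have h2 : ∀ y : T, rr μ (y : S) a
      = μ (cyl (proc S) 0 [a] ∩ {σ | σ 1 = (y : S)}) * (μ (cyl (proc S) 0 [a]))⁻¹ := by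
    intro y; rw [rr, ENNReal.div_eq_inv_mul, mul_comm]
  rw [tsum_congr h2, ENNReal.tsum_mul_right, ← inter_coordT_eq_tsum μ _ measurableSet_cyl,
    rho, ENNReal.div_eq_inv_mul, mul_comm]

lemma cyl_factor (hmp : MeasurePreserving (shift S) μ μ) (hmk : MarkovOrderOne μ) :
    ∀ (v P : List S) (hP : P ≠ []) (a : S) (_ : P.getLast hP = a) (T : Set S),
    μ (cyl (proc S) 0 (P ++ v) ∩ {σ | σ 1 ∈ T})
      = μ (cyl (proc S) 0 P) * (QQ μ a v * rho μ T (lastD a v)) := by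
  intro v
  induction v with
  | nil =>
    intro P hP a ha T
    simp only [List.append_nil, QQ, lastD, one_mul]
    exact step_inter_set μ hmk hP ha T
  | cons y v ih =>
    intro P hP a ha T
    have h1 : P ++ y :: v = (P ++ [y]) ++ v := by simp
    have h2 := ih (P ++ [y]) (by simp) y (List.getLast_append_singleton P) T
    rw [h1, h2, step_append μ hmp, step_inter μ hmk hP ha y]
    simp only [QQ, lastD]
    ring

end SSide

section BoolSide
variable {S : Type*} [MeasurableSpace S] [MeasurableSingletonClass S] [Countable S]

noncomputable def fb (s : S) : S → Bool := fun a => decide (a = s)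

noncomputable def phi (s : S) : (ℤ → S) → (ℤ → Bool) := fun σ n => fb s (σ n)

lemma measurable_phi (s : S) : Measurable (phi s) :=
  measurable_pi_lambda _ fun n => (measurable_of_countable _).comp (measurable_pi_apply n)

lemma pastWord_map (s : S) (σ : ℤ → S) (l : ℤ) (k : ℕ) :
    pastWord (proc Bool) l k (phi s σ) = (pastWord (proc S) l k σ).map (fb s) := by
  rw [pastWord_eq_map, pastWord_eq_map, List.map_map]
  rfl

lemma preimage_cyl_inter (s : S) (w : List Bool) (T' : Set Bool) :
    phi s ⁻¹' (cyl (proc Bool) 0 w ∩ {ω | ω 1 ∈ T'})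
      = ⋃ v : {v : List S // v.map (fb s) = w},
          (cyl (proc S) 0 v.1 ∩ {σ | σ 1 ∈ fb s ⁻¹' T'}) := by
  ext σ
  simp only [Set.mem_preimage, Set.mem_inter_iff, Set.mem_iUnion, Set.mem_setOf_eq]
  constructor
  · rintro ⟨h1, h2⟩
    refine ⟨⟨pastWord (proc S) 0 w.length σ, ?_⟩, ?_, h2⟩
    · rw [← pastWord_map]; exact mem_cyl_iff.1 h1
    · rw [mem_cyl_iff, pastWord_length]
  · rintro ⟨v, h1, h2⟩
    refine ⟨?_, h2⟩
    rw [mem_cyl_iff]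
    have hlen : w.length = v.1.length := by
      have := congrArg List.length v.2
      simp only [List.length_map] at this
      exact this.symm
    rw [hlen, pastWord_map, mem_cyl_iff.1 h1, v.2]

lemma disjoint_cyl_family (s : S) (w : List Bool) (U : Set (ℤ → S)) :
    Pairwise (Function.onFun Disjoint fun v : {v : List S // v.map (fb s) = w} =>
      cyl (proc S) 0 v.1 ∩ U) := by
  intro v₁ v₂ hne
  simp only [Function.onFun]
  rw [Set.disjoint_left]
  rintro σ ⟨h1, -⟩ ⟨h2, -⟩
  apply hne
  apply Subtype.ext
  have e1 := mem_cyl_iff.1 h1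
  have e2 := mem_cyl_iff.1 h2
  have hl : v₁.1.length = v₂.1.length := by
    rw [← List.length_map (as := v₁.1) (fb s), ← List.length_map (as := v₂.1) (fb s), v₁.2, v₂.2]
  rw [← e1, hl, e2]

lemma fb_self (s : S) : fb s s = true := by simp [fb]

def splitEquiv (s : S) (z wt : List Bool) :
    {u : List S // u.map (fb s) = z ++ true :: wt}
      ≃ {u₁ : List S // u₁.map (fb s) = z} × {v : List S // v.map (fb s) = wt} where
  toFun u := (⟨u.1.take z.length, by rw [List.map_take, u.2, List.take_left]⟩,
    ⟨(u.1.drop z.length).tail, by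
      rw [List.map_tail, List.map_drop, u.2, List.drop_left, List.tail_cons]⟩)
  invFun p := ⟨p.1.1 ++ s :: p.2.1, by
    rw [List.map_append, List.map_cons, p.1.2, p.2.2, fb_self]⟩
  left_inv := by
    rintro ⟨u, hu⟩
    apply Subtype.ext
    simp only
    have hmapdrop : (u.drop z.length).map (fb s) = true :: wt := by
      rw [List.map_drop, hu, List.drop_left]
    have h2 : s :: (u.drop z.length).tail = u.drop z.length := by
      cases h : u.drop z.length with
      | nil => rw [h] at hmapdrop; simp at hmapdrop
      | cons a t =>
        rw [h] at hmapdrop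
        simp only [List.map_cons, List.cons.injEq] at hmapdrop
        have ha : a = s := by
          have := hmapdrop.1
          simp only [fb, decide_eq_true_eq] at this
          exact this
        simp [ha]
    rw [h2, List.take_append_drop]
  right_inv := by
    rintro ⟨⟨u₁, h₁⟩, ⟨v, h₂⟩⟩
    have hlen : u₁.length = z.length := by rw [← h₁, List.length_map]
    apply Prod.ext
    · apply Subtype.ext
      simp only
      rw [List.take_left' hlen]
    · apply Subtype.ext
      simp only
      rw [List.drop_left' hlen, List.tail_cons]

noncomputable def Ez (μ : Measure (ℤ → S)) (s : S) (z : List Bool) : ℝ≥0∞ :=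
  ∑' u : {u : List S // u.map (fb s) = z}, μ (cyl (proc S) 0 (u.1 ++ [s]))

noncomputable def Hts (μ : Measure (ℤ → S)) (s : S) (wt : List Bool) (T : Set S) : ℝ≥0∞ :=
  ∑' v : {v : List S // v.map (fb s) = wt}, QQ μ s v.1 * rho μ T (lastD s v.1)

variable (μ : Measure (ℤ → S)) [IsProbabilityMeasure μ]

lemma comp_main (hmp : MeasurePreserving (shift S) μ μ) (hmk : MarkovOrderOne μ)
    (s : S) (z wt : List Bool) (T' : Set Bool) :
    μ (phi s ⁻¹' (cyl (proc Bool) 0 (z ++ true :: wt) ∩ {ω | ω 1 ∈ T'}))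
      = Ez μ s z * Hts μ s wt (fb s ⁻¹' T') := by
  rw [preimage_cyl_inter,
    measure_iUnion (disjoint_cyl_family s _ _)
      (fun v => measurableSet_cyl.inter measurableSet_coordT)]
  set T := fb s ⁻¹' T' with hT
  set F : {v : List S // v.map (fb s) = z ++ true :: wt} → ℝ≥0∞ :=
    fun v => μ (cyl (proc S) 0 v.1 ∩ {σ | σ 1 ∈ T}) with hF
  have hre := Equiv.tsum_eq (splitEquiv s z wt).symm F
  rw [← hre]
  have hterm : ∀ p : {u₁ : List S // u₁.map (fb s) = z} × {v : List S // v.map (fb s) = wt},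
      F ((splitEquiv s z wt).symm p)
        = μ (cyl (proc S) 0 (p.1.1 ++ [s])) * (QQ μ s p.2.1 * rho μ T (lastD s p.2.1)) := by
    intro p
    have hval : ((splitEquiv s z wt).symm p).1 = p.1.1 ++ s :: p.2.1 := rfl
    rw [hF]
    simp only [hval]
    have h3 : p.1.1 ++ s :: p.2.1 = (p.1.1 ++ [s]) ++ p.2.1 := by simp
    rw [h3]
    exact cyl_factor μ hmp hmk p.2.1 (p.1.1 ++ [s]) (by simp) s
      (List.getLast_append_singleton _) T
  rw [tsum_congr hterm, ENNReal.tsum_prod']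
  have hin : ∀ u₁ : {u₁ : List S // u₁.map (fb s) = z},
      (∑' v : {v : List S // v.map (fb s) = wt},
        μ (cyl (proc S) 0 (u₁.1 ++ [s])) * (QQ μ s v.1 * rho μ T (lastD s v.1)))
      = μ (cyl (proc S) 0 (u₁.1 ++ [s])) * Hts μ s wt T := by
    intro u₁
    rw [ENNReal.tsum_mul_left, Hts]
  rw [tsum_congr hin, ENNReal.tsum_mul_right, Ez]

end BoolSide

section Main
variable {S : Type*} [MeasurableSpace S] [MeasurableSingletonClass S] [Countable S]
variable (μ : Measure (ℤ → S)) [IsProbabilityMeasure μ]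

lemma measurableSet_coordB {t : ℤ} {T' : Set Bool} : MeasurableSet {ω : ℤ → Bool | ω t ∈ T'} :=
  measurableSet_eval (Set.to_countable T').measurableSet

lemma nu_measurePreserving (hmp : MeasurePreserving (shift S) μ μ) (s : S) :
    MeasurePreserving (shift Bool) (μ.map (phi s)) (μ.map (phi s)) := by
  constructor
  · exact measurable_shift
  · rw [Measure.map_map measurable_shift (measurable_phi s)]
    have hcomm : shift Bool ∘ phi s = phi s ∘ shift S := rfl
    rw [hcomm, ← Measure.map_map (measurable_phi s) measurable_shift, hmp.map_eq]

lemma key_eval (hmp : MeasurePreserving (shift S) μ μ) (hmk : MarkovOrderOne μ)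
    (s : S) (z wt : List Bool) (T' : Set Bool) :
    (μ.map (phi s)) (cyl (proc Bool) 0 (z ++ true :: wt) ∩ {ω | ω 1 ∈ T'})
      = Ez μ s z * Hts μ s wt (fb s ⁻¹' T') := by
  rw [Measure.map_apply (measurable_phi s) (measurableSet_cyl.inter measurableSet_coordB)]
  exact comp_main μ hmp hmk s z wt T'

lemma key_cyl (hmp : MeasurePreserving (shift S) μ μ) (hmk : MarkovOrderOne μ)
    (s : S) (z wt : List Bool) :
    (μ.map (phi s)) (cyl (proc Bool) 0 (z ++ true :: wt))
      = Ez μ s z * Hts μ s wt (fb s ⁻¹' Set.univ) := by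
  rw [← key_eval μ hmp hmk s z wt Set.univ]
  congr 1
  have : {ω : ℤ → Bool | ω 1 ∈ (Set.univ : Set Bool)} = Set.univ := by ext; simp
  rw [this, Set.inter_univ]

lemma key_cond (hmp : MeasurePreserving (shift S) μ μ) (hmk : MarkovOrderOne μ)
    (s : S) (z wt : List Bool) (x : Bool) :
    (μ.map (phi s)) (cyl (proc Bool) 0 (z ++ true :: wt) ∩ {ω | proc Bool 1 ω = x})
      = Ez μ s z * Hts μ s wt (fb s ⁻¹' {x}) := by
  have hset : {ω : ℤ → Bool | proc Bool 1 ω = x} = {ω : ℤ → Bool | ω 1 ∈ ({x} : Set Bool)} := by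
    ext ω; simp [proc]
  rw [hset]
  exact key_eval μ hmp hmk s z wt {x}

lemma Ez_nil (s : S) : Ez μ s [] = μ (cyl (proc S) 0 [s]) := by
  rw [Ez]
  have h := tsum_eq_single (L := SummationFilter.unconditional _) (f := fun u : {u : List S // u.map (fb s) = []} =>
    μ (cyl (proc S) 0 (u.1 ++ [s]))) (⟨[], by simp⟩ : {u : List S // u.map (fb s) = []})
    (fun u hne => absurd (Subtype.ext (List.map_eq_nil_iff.1 u.2)) hne)
  rw [h]
  simp only []
  norm_num

lemma isMemoryWord_of_head_true (hmp : MeasurePreserving (shift S) μ μ)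
    (hmk : MarkovOrderOne μ) (s : S) (wt : List Bool)
    (hpos : 0 < wordProb (μ.map (phi s)) (proc Bool) (true :: wt)) :
    IsMemoryWord (μ.map (phi s)) (proc Bool) (true :: wt) := by
  set ν := μ.map (phi s) with hν
  have hprob : IsProbabilityMeasure ν := Measure.isProbabilityMeasure_map (measurable_phi s).aemeasurable
  set G := Hts μ s wt (fb s ⁻¹' Set.univ) with hG
  have hw0 : ν (cyl (proc Bool) 0 (true :: wt)) = Ez μ s [] * G := by
    have h := key_cyl μ hmp hmk s [] wt
    rw [List.nil_append] at h
    exact h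
  have hne : ν (cyl (proc Bool) 0 (true :: wt)) ≠ 0 := by
    intro h
    rw [wordProb, hν, h] at hpos
    simp at hpos
  have hEz0 : Ez μ s [] ≠ 0 := by
    intro h; apply hne; rw [hw0, h, zero_mul]
  have hG0 : G ≠ 0 := by
    intro h; apply hne; rw [hw0, h, mul_zero]
  have hfin : ν (cyl (proc Bool) 0 (true :: wt)) ≠ ∞ := measure_ne_top ν _
  have hGtop : G ≠ ∞ := by
    intro h; apply hfin; rw [hw0, h, ENNReal.mul_top hEz0]
  refine ⟨hpos, ?_⟩
  intro z y hz hzpos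
  -- positivity of the extended cylinder
  have hzc : ν (cyl (proc Bool) 0 (z ++ true :: wt)) ≠ 0 := by
    have h1 : ν (cyl (proc Bool) 0 (z ++ true :: wt ++ [y])) ≠ 0 := by
      intro h
      rw [wordProb, hν, h] at hzpos
      simp at hzpos
    intro h
    apply h1
    have hsub : cyl (proc Bool) 0 (z ++ true :: wt ++ [y])
        ⊆ cyl (proc Bool) (0 - (([y] : List Bool).length : ℤ)) (z ++ true :: wt) := by
      rw [cyl_append]
      exact Set.inter_subset_left
    have hst := stationary_of_measurePreserving (nu_measurePreserving μ hmp s)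
      (0 - (([y] : List Bool).length : ℤ)) (z ++ true :: wt)
    refine le_antisymm ?_ zero_le
    calc ν (cyl (proc Bool) 0 (z ++ true :: wt ++ [y]))
        ≤ ν (cyl (proc Bool) (0 - (([y] : List Bool).length : ℤ)) (z ++ true :: wt)) :=
          measure_mono hsub
      _ = ν (cyl (proc Bool) 0 (z ++ true :: wt)) := hst
      _ = 0 := h
  have hwz : ν (cyl (proc Bool) 0 (z ++ true :: wt)) = Ez μ s z * G :=
    key_cyl μ hmp hmk s z wt
  have hEz0' : Ez μ s z ≠ 0 := by
    intro h; apply hzc; rw [hwz, h, zero_mul]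
  have hEztop' : Ez μ s z ≠ ∞ := by
    intro h
    apply measure_ne_top ν (cyl (proc Bool) 0 (z ++ true :: wt))
    rw [hwz, h, ENNReal.top_mul hG0]
  have hEztop : Ez μ s [] ≠ ∞ := by
    intro h
    apply hfin
    rw [hw0, h, ENNReal.top_mul hG0]
  -- compute both conditional probabilities
  have hcp : ∀ (z' : List Bool), Ez μ s z' ≠ 0 → Ez μ s z' ≠ ∞ →
      condProb ν (proc Bool) y (z' ++ true :: wt)
        = (Hts μ s wt (fb s ⁻¹' {y})).toReal / G.toReal := by
    intro z' h0 htop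
    rw [condProb, wordProb, hν, key_cond μ hmp hmk s z' wt y, key_cyl μ hmp hmk s z' wt,
      ENNReal.toReal_mul, ENNReal.toReal_mul, ← hG]
    exact mul_div_mul_left _ _ (ENNReal.toReal_ne_zero.2 ⟨h0, htop⟩)
  have h1 := hcp [] hEz0 hEztop
  have h2 := hcp z hEz0' hEztop'
  simp only [List.nil_append] at h1
  rw [h1, h2]

end Main

section Final
variable {S : Type*} [MeasurableSpace S] [MeasurableSingletonClass S] [Countable S]
variable (μ : Measure (ℤ → S)) [IsProbabilityMeasure μ]

lemma nu_ergodic (herg : Ergodic (shift S) μ) (s : S) :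
    Ergodic (shift Bool) (μ.map (phi s)) := by
  refine ⟨nu_measurePreserving μ herg.toMeasurePreserving s, ⟨fun A hA hinv => ?_⟩⟩
  rw [Filter.eventuallyConst_set]
  have hpre : shift S ⁻¹' (phi s ⁻¹' A) = phi s ⁻¹' A := by
    have h1 : shift S ⁻¹' (phi s ⁻¹' A) = (phi s ∘ shift S) ⁻¹' A := rfl
    have h2 : phi s ∘ shift S = shift Bool ∘ phi s := rfl
    rw [h1, h2, Set.preimage_comp, hinv]
  rcases herg.ae_empty_or_univ ((measurable_phi s) hA) hpre with h | h
  · right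
    have h0 : (μ.map (phi s)) A = 0 := by
      rw [Measure.map_apply (measurable_phi s) hA]; exact ae_eq_empty.1 h
    exact measure_eq_zero_iff_ae_notMem.1 h0
  · left
    have h0 : (μ.map (phi s)) Aᶜ = 0 := by
      rw [Measure.map_apply (measurable_phi s) hA.compl, Set.preimage_compl]
      exact ae_eq_univ.1 h
    filter_upwards [measure_eq_zero_iff_ae_notMem.1 h0] with ω hω
    simpa using hω

lemma shift_iterate_apply {𝒳 : Type*} (k : ℕ) (ω : ℤ → 𝒳) (t : ℤ) :
    (shift 𝒳)^[k] ω t = ω (t + k) := by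
  induction k generalizing ω t with
  | zero => simp
  | succ k ih =>
    rw [Function.iterate_succ, Function.comp_apply, ih]
    show ω (t + k + 1) = ω (t + ((k + 1 : ℕ) : ℤ))
    congr 1
    push_cast
    ring

lemma aezero_allfalse (herg : Ergodic (shift S) μ) (s : S) (hs : 0 < μ {ω | ω 1 = s}) :
    (μ.map (phi s)) {ω : ℤ → Bool | ∀ m : ℕ, ω (-(m : ℤ)) = false} = 0 := by
  set ν := μ.map (phi s) with hν
  have hprob : IsProbabilityMeasure ν := Measure.isProbabilityMeasure_map (measurable_phi s).aemeasurable
  set E : Set (ℤ → Bool) := {ω | ∀ m : ℕ, ω (-(m : ℤ)) = false} with hE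
  have hmE : MeasurableSet E := by
    have h1 : E = ⋂ m : ℕ, {ω : ℤ → Bool | ω (-(m : ℤ)) ∈ ({false} : Set Bool)} := by
      ext; simp [hE]
    rw [h1]; exact MeasurableSet.iInter fun m => measurableSet_eval (measurableSet_singleton _)
  set F : Set (ℤ → Bool) := {ω | ∀ n : ℤ, ω n = false} with hF
  have hmF : MeasurableSet F := by
    have h1 : F = ⋂ n : ℤ, {ω : ℤ → Bool | ω n ∈ ({false} : Set Bool)} := by
      ext; simp [hF]
    rw [h1]; exact MeasurableSet.iInter fun n => measurableSet_eval (measurableSet_singleton _)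
  have hshift : ∀ k : ℕ, (shift Bool)^[k] ⁻¹' E
      = {ω : ℤ → Bool | ∀ m : ℕ, ω ((k : ℤ) - m) = false} := by
    intro k
    ext ω
    simp only [Set.mem_preimage, hE, Set.mem_setOf_eq]
    constructor
    · intro h m
      have := h m
      rw [shift_iterate_apply] at this
      have e : -(m : ℤ) + k = (k : ℤ) - m := by ring
      rw [e] at this
      exact this
    · intro h m
      rw [shift_iterate_apply]
      have e : -(m : ℤ) + k = (k : ℤ) - m := by ring
      rw [e]
      exact h m
  have hFeq : F = ⋂ k : ℕ, (shift Bool)^[k] ⁻¹' E := by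
    ext ω
    simp only [hF, Set.mem_setOf_eq, Set.mem_iInter, hshift]
    constructor
    · intro h k m; exact h _
    · intro h n
      have e : ((n.toNat : ℤ)) - (((n.toNat : ℤ) - n).toNat : ℤ) = n := by omega
      have := h n.toNat ((n.toNat : ℤ) - n).toNat
      rw [e] at this
      exact this
  have hmp := nu_measurePreserving μ herg.toMeasurePreserving s
  have hνE_eq : ∀ k : ℕ, ν ((shift Bool)^[k] ⁻¹' E) = ν E := fun k =>
    (hmp.iterate k).measure_preimage hmE.nullMeasurableSet
  have hanti : Antitone (fun k : ℕ => (shift Bool)^[k] ⁻¹' E) := by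
    intro k k' hkk'
    show (shift Bool)^[k'] ⁻¹' E ≤ (shift Bool)^[k] ⁻¹' E
    rw [hshift, hshift]
    intro ω hω m
    have := hω (m + (k' - k))
    have e : (k' : ℤ) - (m + (k' - k) : ℕ) = (k : ℤ) - m := by omega
    rw [e] at this
    exact this
  have hνF : ν F = ν E := by
    rw [hFeq, Directed.measure_iInter
      (fun k => ((measurable_shift.iterate k) hmE).nullMeasurableSet)
      hanti.directed_ge ⟨0, measure_ne_top ν _⟩]
    simp only [hνE_eq]
    exact iInf_const
  have hFinv : shift Bool ⁻¹' F = F := by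
    ext ω
    simp only [Set.mem_preimage, hF, Set.mem_setOf_eq, shift]
    constructor
    · intro h n
      have := h (n - 1)
      simpa using this
    · intro h n; exact h _
  rcases (nu_ergodic μ herg s).ae_empty_or_univ hmF hFinv with h | h
  · rw [← hνF]
    exact ae_eq_empty.1 h
  · exfalso
    have h0 : ν Fᶜ = 0 := ae_eq_univ.1 h
    have h1 : ν {ω : ℤ → Bool | ω 1 = true} ≤ ν Fᶜ := by
      apply measure_mono
      intro ω hω hF'
      have := hF' 1
      rw [Set.mem_setOf_eq] at hω
      rw [hω] at this
      exact Bool.noConfusion this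
    have h2 : ν {ω : ℤ → Bool | ω 1 = true} = μ {σ : ℤ → S | σ 1 = s} := by
      rw [hν, Measure.map_apply (measurable_phi s) measurableSet_coord]
      congr 1
      ext σ
      simp [phi, fb]
    rw [h2, h0] at h1
    exact absurd (le_antisymm h1 zero_le) hs.ne'

lemma ae_pos_words (s : S) :
    ∀ᵐ ω ∂(μ.map (phi s)), ∀ w : List Bool,
      (μ.map (phi s)) (cyl (proc Bool) 0 w) = 0 → ω ∉ cyl (proc Bool) 0 w := by
  rw [ae_all_iff]
  intro w
  by_cases h : (μ.map (phi s)) (cyl (proc Bool) 0 w) = 0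
  · filter_upwards [measure_eq_zero_iff_ae_notMem.1 h] with ω hω _
    exact hω
  · filter_upwards with ω h'
    exact absurd h' h

end Final


/-- the indicator process of visits to a fixed state of a stationary ergodic
first order Markov chain is stationary, ergodic and finitarily Markovian; moreover the
conditional law of the next symbol depends only on the past back to the most recent `1`:
any past word reaching back to an occurrence of a one is a memory word (a.s.). -/
theorem indicator_of_markov_is_finitarily_markovian
    {S : Type*} [MeasurableSpace S] [MeasurableSingletonClass S] [Countable S]
    [DecidableEq S]
    (μ : Measure (ℤ → S)) [IsProbabilityMeasure μ]
    (herg : Ergodic (shift S) μ) (hmk : MarkovOrderOne μ)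
    (s : S) (hs : 0 < μ {ω | ω 1 = s}) :
    IsStationary (μ.map fun ω (n : ℤ) => decide (ω n = s)) (proc Bool) ∧
    Ergodic (shift Bool) (μ.map fun ω (n : ℤ) => decide (ω n = s)) ∧
    FinitarilyMarkovian (μ.map fun ω (n : ℤ) => decide (ω n = s)) (proc Bool) ∧
    (∀ᵐ ω ∂(μ.map fun ω (n : ℤ) => decide (ω n = s)), ∀ m : ℕ, ω (-(m : ℤ)) = true →
      IsMemoryWord (μ.map fun ω (n : ℤ) => decide (ω n = s)) (proc Bool)
        (pastWord (proc Bool) 0 (m + 1) ω)) := by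
  have hphi : phi s = (fun ω (n : ℤ) => decide (ω n = s)) := by
    funext σ n
    exact decide_eq_decide.2 Iff.rfl
  rw [← hphi]
  have hmp := herg.toMeasurePreserving
  have hnump := nu_measurePreserving μ hmp s
  have hprob : IsProbabilityMeasure (μ.map (phi s)) :=
    Measure.isProbabilityMeasure_map (measurable_phi s).aemeasurable
  set ν := μ.map (phi s) with hνdef
  have h4 : ∀ᵐ ω ∂ν, ∀ m : ℕ, ω (-(m : ℤ)) = true →
      IsMemoryWord ν (proc Bool) (pastWord (proc Bool) 0 (m + 1) ω) := by
    filter_upwards [ae_pos_words μ s] with ω hω m hm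
    have hlen : (pastWord (proc Bool) 0 (m + 1) ω).length = m + 1 := pastWord_length
    have hmem : ω ∈ cyl (proc Bool) 0 (pastWord (proc Bool) 0 (m + 1) ω) :=
      self_mem_cyl_pastWord
    have hne : ν (cyl (proc Bool) 0 (pastWord (proc Bool) 0 (m + 1) ω)) ≠ 0 :=
      fun h => hω _ h hmem
    have hpos : 0 < wordProb ν (proc Bool) (pastWord (proc Bool) 0 (m + 1) ω) :=
      ENNReal.toReal_pos hne (measure_ne_top ν _)
    have hhead : (pastWord (proc Bool) 0 (m + 1) ω)[0]'(by simp) = true := by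
      rw [pastWord_getElem (Nat.succ_pos m)]
      show ω ((0 : ℤ) - ((m + 1 : ℕ) : ℤ) + 1 + ((0 : ℕ) : ℤ)) = true
      have e : (0 : ℤ) - ((m + 1 : ℕ) : ℤ) + 1 + ((0 : ℕ) : ℤ) = -(m : ℤ) := by
        push_cast; ring
      rw [e]
      exact hm
    obtain ⟨b, t, hbt⟩ : ∃ b t, pastWord (proc Bool) 0 (m + 1) ω = b :: t := by
      cases hcase : pastWord (proc Bool) 0 (m + 1) ω with
      | nil => rw [hcase] at hlen; simp at hlen
      | cons b t => exact ⟨b, t, rfl⟩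
    simp only [hbt, List.getElem_cons_zero] at hhead
    rw [hbt, hhead] at hpos
    rw [hbt, hhead]
    exact isMemoryWord_of_head_true μ hmp hmk s t hpos
  refine ⟨stationary_of_measurePreserving hnump, nu_ergodic μ herg s, ?_, h4⟩
  have hzero := aezero_allfalse μ herg s hs
  have hEae : ∀ᵐ ω ∂ν, ¬ ∀ m : ℕ, ω (-(m : ℤ)) = false := by
    filter_upwards [measure_eq_zero_iff_ae_notMem.1 hzero] with ω hω
    exact hω
  filter_upwards [h4, hEae] with ω h4ω hEω
  push_neg at hEω
  obtain ⟨m, hm⟩ := hEω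
  have hm' : ω (-(m : ℤ)) = true := by
    cases hb : ω (-(m : ℤ))
    · exact absurd hb hm
    · rfl
  exact ⟨m + 1, h4ω m hm'⟩


end MemoryEst
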